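/- Fix n ∈ ℕ. Suppose there exists w ∈ D_qc(n) with w ∉ D_qa(n). Then there exist y ∈ [0,1]^n and a vector x = (x_{ij})_{0 ≤ i < j < n} of real numbers such that u_q(y,x) ≠ u_qc(y,x), where u_r(y,x) := sup{ ∑_{i<j} x_{ij} w_{ij} : w ∈ S_y[D_r(n)] }. -/

import Mathlib

open scoped ComplexOrder BigOperators

/-- A tracial representation of n projections: a unital C*-algebra with a tracial
state τ and projections P 0, …, P (n-1). -/
structure ProjRep (n : ℕ) where
  A : Type
  [ring : NormedRing A]
  [starRing : StarRing A]
  [cstar : CStarRing A]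
  [alg : NormedAlgebra ℂ A]
  [complete : CompleteSpace A]
  [smod : StarModule ℂ A]
  τ : A →ₗ[ℂ] ℂ
  P : Fin n → A
  unit : τ 1 = 1
  pos : ∀ a : A, 0 ≤ τ (star a * a)
  tracial : ∀ a b : A, τ (a * b) = τ (b * a)
  proj_sa : ∀ i, star (P i) = P i
  proj_idem : ∀ i, P i * P i = P i

attribute [instance] ProjRep.ring ProjRep.starRing ProjRep.cstar ProjRep.alg
  ProjRep.complete ProjRep.smod

/-- A finite-dimensional tracial representation of n projections. -/
structure FinProjRep (n : ℕ) extends ProjRep n where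
  [fd : FiniteDimensional ℂ toProjRep.A]

/-- D_qc(n): real symmetric n×n matrices of the form w i j = τ(P i * P j). -/
def Dqc (n : ℕ) : Set (Matrix (Fin n) (Fin n) ℝ) :=
  {w | w.IsSymm ∧ ∃ r : ProjRep n, ∀ i j, (w i j : ℂ) = r.τ (r.P i * r.P j)}

/-- D_q(n): the same with a finite-dimensional C*-algebra. -/
def Dq (n : ℕ) : Set (Matrix (Fin n) (Fin n) ℝ) :=
  {w | w.IsSymm ∧ ∃ r : FinProjRep n, ∀ i j, (w i j : ℂ) = r.τ (r.P i * r.P j)}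

/-- D_qa(n): the closure of D_q(n). -/
def Dqa (n : ℕ) : Set (Matrix (Fin n) (Fin n) ℝ) := closure (Dq n)

/-- The y-slice S_y[D] of a set D of n×n matrices: vectors (w i j)_{i<j} that extend
to an element of D with diagonal y (entries with ¬(i<j) are unconstrained). -/
def ySlice {n : ℕ} (D : Set (Matrix (Fin n) (Fin n) ℝ)) (y : Fin n → ℝ) :
    Set (Fin n → Fin n → ℝ) :=
  {w | ∃ p ∈ D, (∀ i j : Fin n, i < j → p i j = w i j) ∧ ∀ i, p i i = y i}

/-- u_r(y,x) := sup { ∑_{i<j} x i j * w i j : w ∈ S_y[D_r(n)] }. -/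
noncomputable def uVal {n : ℕ} (D : Set (Matrix (Fin n) (Fin n) ℝ))
    (y : Fin n → ℝ) (x : Fin n → Fin n → ℝ) : ℝ :=
  sSup ((fun w => ∑ i, ∑ j, if i < j then x i j * w i j else 0) '' ySlice D y)

section Bounds

variable {n : ℕ}

lemma dqc_pi_pj_real {w : Matrix (Fin n) (Fin n) ℝ} (hw : w ∈ Dqc n) (i j : Fin n) :
    0 ≤ w i i + w j j - w i j - w j i ∧ 0 ≤ w i i + w j j + w i j + w j i := by
  obtain ⟨hs, r, hr⟩ := hw
  constructor
  · have h0 := r.pos (r.P i - r.P j)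
    have e : star (r.P i - r.P j) * (r.P i - r.P j)
        = r.P i * r.P i + r.P j * r.P j - r.P i * r.P j - r.P j * r.P i := by
      rw [star_sub, r.proj_sa, r.proj_sa]; noncomm_ring
    rw [e, map_sub, map_sub, map_add, ← hr, ← hr, ← hr, ← hr] at h0
    have : ((0:ℝ):ℂ) ≤ ((w i i + w j j - w i j - w j i : ℝ) : ℂ) := by push_cast; simpa using h0
    exact Complex.real_le_real.mp this
  · have h0 := r.pos (r.P i + r.P j)
    have e : star (r.P i + r.P j) * (r.P i + r.P j)
        = r.P i * r.P i + r.P j * r.P j + r.P i * r.P j + r.P j * r.P i := by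
      rw [star_add, r.proj_sa, r.proj_sa]; noncomm_ring
    rw [e, map_add, map_add, map_add, ← hr, ← hr, ← hr, ← hr] at h0
    have : ((0:ℝ):ℂ) ≤ ((w i i + w j j + w i j + w j i : ℝ) : ℂ) := by push_cast; simpa using h0
    exact Complex.real_le_real.mp this

lemma dqc_diag_mem {w : Matrix (Fin n) (Fin n) ℝ} (hw : w ∈ Dqc n) (i : Fin n) :
    w i i ∈ Set.Icc (0:ℝ) 1 := by
  obtain ⟨hs, r, hr⟩ := hw
  constructor
  · have h0 := r.pos (r.P i)
    rw [r.proj_sa, ← hr] at h0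
    exact Complex.zero_le_real.mp h0
  · have h0 := r.pos (1 - r.P i)
    have e : star ((1:r.A) - r.P i) * ((1:r.A) - r.P i) = 1 - r.P i * r.P i := by
      rw [star_sub, star_one, r.proj_sa]
      have e2 : ((1:r.A) - r.P i) * (1 - r.P i) = 1 - r.P i - r.P i + r.P i * r.P i := by
        noncomm_ring
      rw [e2, r.proj_idem]
      abel
    rw [e, map_sub, r.unit, ← hr] at h0
    have : ((w i i : ℝ):ℂ) ≤ ((1:ℝ):ℂ) := by
      push_cast
      rw [sub_nonneg] at h0
      exact h0
    exact Complex.real_le_real.mp this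

lemma dqc_entry_mem {w : Matrix (Fin n) (Fin n) ℝ} (hw : w ∈ Dqc n) (i j : Fin n) :
    |w i j| ≤ 1 := by
  obtain ⟨h1, h2⟩ := dqc_pi_pj_real hw i j
  have hii := dqc_diag_mem hw i
  have hjj := dqc_diag_mem hw j
  have hsym : w j i = w i j := hw.1.apply i j
  rw [hsym] at h1 h2
  rw [abs_le]
  constructor <;> [nlinarith [hii.1, hii.2, hjj.1, hjj.2]; nlinarith [hii.1, hii.2, hjj.1, hjj.2]]

end Bounds
section Bern

variable {n : ℕ}

/-- sum over Boolean strings of a product equals product of sums -/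
lemma bool_sum_prod (g : Fin n → Bool → ℂ) :
    ∑ s : Fin n → Bool, ∏ k, g k (s k) = ∏ k, (g k true + g k false) := by
  rw [← Fintype.piFinset_univ, Finset.sum_prod_piFinset]
  congr 1
  funext k
  simp

/-- The Bernoulli finite-dimensional representation. -/
noncomputable def bern (y : Fin n → ℝ) (hy : ∀ i, y i ∈ Set.Icc (0:ℝ) 1) : FinProjRep n where
  A := (Fin n → Bool) → ℂ
  τ := ∑ s : Fin n → Bool, (∏ k, if s k then (y k : ℂ) else 1 - y k) • LinearMap.proj s
  P := fun i s => if s i then 1 else 0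
  unit := by
    simp only [LinearMap.sum_apply, LinearMap.smul_apply, LinearMap.proj_apply, Pi.one_apply,
      smul_eq_mul, mul_one]
    rw [bool_sum_prod (fun k b => if b then (y k : ℂ) else 1 - y k)]
    simp
  pos := by
    intro a
    simp only [LinearMap.sum_apply, LinearMap.smul_apply, LinearMap.proj_apply, smul_eq_mul,
      Pi.mul_apply, Pi.star_apply]
    apply Finset.sum_nonneg
    intro s _
    apply mul_nonneg
    · apply Finset.prod_nonneg
      intro k _
      rcases s k with _ | _
      · simp only [Bool.false_eq_true, if_neg, ite_false]
        rw [← Complex.ofReal_one, ← Complex.ofReal_sub, Complex.zero_le_real]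
        linarith [(hy k).2]
      · simp only [ite_true]
        rw [Complex.zero_le_real]
        exact (hy k).1
    · exact star_mul_self_nonneg (a s)
  tracial := by
    intro a b
    simp only [LinearMap.sum_apply, LinearMap.smul_apply, LinearMap.proj_apply, smul_eq_mul,
      Pi.mul_apply]
    congr 1; funext s; ring
  proj_sa := by
    intro i; funext s
    simp only [Pi.star_apply]
    rcases s i with _ | _ <;> simp
  proj_idem := by
    intro i; funext s
    simp only [Pi.mul_apply]
    rcases s i with _ | _ <;> simp

lemma bern_entry (y : Fin n → ℝ) (hy : ∀ i, y i ∈ Set.Icc (0:ℝ) 1) (i j : Fin n) :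
    (bern y hy).τ ((bern y hy).P i * (bern y hy).P j)
      = if i = j then (y i : ℂ) else (y i : ℂ) * y j := by
  classical
  have : (bern y hy).τ ((bern y hy).P i * (bern y hy).P j)
      = ∑ s : Fin n → Bool, ∏ k, ((if s k then (y k : ℂ) else 1 - y k) *
          (if k ∈ ({i, j} : Finset (Fin n)) then (if s k then 1 else 0) else 1)) := by
    simp only [bern, LinearMap.sum_apply, LinearMap.smul_apply, LinearMap.proj_apply,
      smul_eq_mul, Pi.mul_apply]
    erw [LinearMap.sum_apply]
    simp only [LinearMap.smul_apply, LinearMap.proj_apply, smul_eq_mul, Pi.mul_apply]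
    congr 1; funext s
    erw [Pi.mul_apply]
    rw [Finset.prod_mul_distrib]
    congr 1
    rw [Finset.prod_ite_mem, Finset.univ_inter]
    by_cases hij : i = j
    · subst hij
      rw [Finset.pair_eq_singleton, Finset.prod_singleton]
      rcases s i with _ | _ <;> simp
    · rw [Finset.prod_pair hij]
  have key := bool_sum_prod (fun k b => (if b then (y k : ℂ) else 1 - y k) *
          (if k ∈ ({i, j} : Finset (Fin n)) then (if b then (1:ℂ) else 0) else 1))
  rw [this, key]
  have : ∀ k : Fin n, ((if true then (y k : ℂ) else 1 - y k) *
          (if k ∈ ({i, j} : Finset (Fin n)) then (if true then (1:ℂ) else 0) else 1))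
      + ((if false then (y k : ℂ) else 1 - y k) *
          (if k ∈ ({i, j} : Finset (Fin n)) then (if false then (1:ℂ) else 0) else 1))
      = if k ∈ ({i, j} : Finset (Fin n)) then (y k : ℂ) else 1 := by
    intro k
    by_cases hk : k ∈ ({i, j} : Finset (Fin n)) <;> simp [hk] <;> ring
  rw [Finset.prod_congr rfl (fun k _ => this k), Finset.prod_ite_mem, Finset.univ_inter]
  by_cases hij : i = j
  · subst hij; rw [Finset.pair_eq_singleton, Finset.prod_singleton, if_pos rfl]
  · rw [Finset.prod_pair hij, if_neg hij]

/-- the matrix realized by the Bernoulli representation -/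
lemma bern_mem_Dq (y : Fin n → ℝ) (hy : ∀ i, y i ∈ Set.Icc (0:ℝ) 1) :
    (Matrix.of fun i j => if i = j then y i else y i * y j) ∈ Dq n ∧
      (∀ i, (Matrix.of fun i j => if i = j then y i else y i * y j) i i = y i) := by
  refine ⟨⟨?_, ⟨bern y hy, ?_⟩⟩, ?_⟩
  · rw [Matrix.IsSymm.ext_iff]
    intro a b
    by_cases hab : a = b
    · subst hab; simp
    · simp only [Matrix.of_apply, if_neg hab, if_neg (Ne.symm hab)]
      ring
  · intro i j
    rw [bern_entry y hy i j]
    by_cases hij : i = j <;> simp [hij]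
  · intro i; simp

end Bern
section Convexity

variable {n : ℕ}

/-- the direct sum of two finite-dimensional representations with weights -/
noncomputable def prodRep (r1 r2 : FinProjRep n) (a b : ℝ) (ha : 0 ≤ a) (hb : 0 ≤ b)
    (hab : a + b = 1) : FinProjRep n where
  A := r1.A × r2.A
  τ := (a : ℂ) • (r1.τ ∘ₗ LinearMap.fst ℂ r1.A r2.A) + (b : ℂ) • (r2.τ ∘ₗ LinearMap.snd ℂ r1.A r2.A)
  P := fun i => (r1.P i, r2.P i)
  unit := by
    simp only [LinearMap.add_apply, LinearMap.smul_apply, LinearMap.coe_comp, Function.comp_apply,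
      LinearMap.fst_apply, LinearMap.snd_apply, Prod.fst_one, Prod.snd_one, r1.unit, r2.unit,
      smul_eq_mul, mul_one]
    rw [← Complex.ofReal_add, hab, Complex.ofReal_one]
  pos := by
    intro x
    simp only [LinearMap.add_apply, LinearMap.smul_apply, LinearMap.coe_comp, Function.comp_apply,
      LinearMap.fst_apply, LinearMap.snd_apply, Prod.fst_mul, Prod.snd_mul, smul_eq_mul]
    have h1 := r1.pos x.1
    have h2 := r2.pos x.2
    have e1 : (star x).1 = star x.1 := rfl
    have e2 : (star x).2 = star x.2 := rfl
    rw [e1, e2]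
    exact add_nonneg (mul_nonneg (Complex.zero_le_real.mpr ha) h1)
      (mul_nonneg (Complex.zero_le_real.mpr hb) h2)
  tracial := by
    intro x z
    simp only [LinearMap.add_apply, LinearMap.smul_apply, LinearMap.coe_comp, Function.comp_apply,
      LinearMap.fst_apply, LinearMap.snd_apply, Prod.fst_mul, Prod.snd_mul]
    rw [r1.tracial, r2.tracial]
  proj_sa := by
    intro i
    have : star (r1.P i, r2.P i) = (star (r1.P i), star (r2.P i)) := rfl
    rw [this, r1.proj_sa, r2.proj_sa]
  proj_idem := by
    intro i
    have : ((r1.P i, r2.P i) : r1.A × r2.A) * (r1.P i, r2.P i)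
        = (r1.P i * r1.P i, r2.P i * r2.P i) := rfl
    rw [this, r1.proj_idem, r2.proj_idem]
  fd := by
    haveI := r1.fd
    haveI := r2.fd
    infer_instance

lemma Dq_convex : Convex ℝ (Dq n) := by
  intro p hp q hq a b ha hb hab
  obtain ⟨hps, r1, hr1⟩ := hp
  obtain ⟨hqs, r2, hr2⟩ := hq
  refine ⟨?_, ⟨prodRep r1 r2 a b ha hb hab, ?_⟩⟩
  · rw [Matrix.IsSymm.ext_iff]
    intro i j
    simp only [Matrix.add_apply, Matrix.smul_apply, smul_eq_mul]
    rw [hps.apply i j, hqs.apply i j]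
  · intro i j
    simp only [Matrix.add_apply, Matrix.smul_apply, smul_eq_mul, prodRep, LinearMap.add_apply,
      LinearMap.smul_apply, LinearMap.coe_comp, Function.comp_apply, LinearMap.fst_apply,
      LinearMap.snd_apply, Prod.fst_mul, Prod.snd_mul]
    push_cast
    rw [hr1 i j, hr2 i j]
    rfl

end Convexity
section Decomp

variable {n : ℕ}

lemma pi_decomp (p : Fin n → Fin n → ℝ) :
    p = ∑ i, ∑ j, p i j • (Pi.single i (Pi.single j (1:ℝ)) : Fin n → Fin n → ℝ) := by
  funext a b
  simp only [Finset.sum_apply, Pi.smul_apply, Pi.single_apply, smul_eq_mul]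
  rw [Finset.sum_eq_single a]
  · rw [Finset.sum_eq_single b]
    · simp
    · intro c _ hc; simp [hc, Ne.symm hc]
    · intro hc; simp at hc
  · intro c _ hc
    simp only [if_neg (Ne.symm hc)]
    simp [Ne.symm hc]
  · intro hc; simp at hc

lemma clm_decomp (f : (Fin n → Fin n → ℝ) →L[ℝ] ℝ) (p : Fin n → Fin n → ℝ) :
    f p = ∑ i, ∑ j, p i j * f ((Pi.single i (Pi.single j (1:ℝ)) : Fin n → Fin n → ℝ)) := by
  conv_lhs => rw [pi_decomp p]
  rw [map_sum]
  congr 1; funext i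
  rw [map_sum]
  congr 1; funext j
  rw [map_smul, smul_eq_mul]

lemma sum_split (F : Fin n → Fin n → ℝ) :
    ∑ i, ∑ j, F i j
      = (∑ i, ∑ j, if i < j then F i j + F j i else 0) + ∑ i, F i i := by
  have pointwise : ∀ i j : Fin n, F i j = (if i < j then F i j else 0)
      + (if j < i then F i j else 0) + (if i = j then F i j else 0) := by
    intro i j
    rcases lt_trichotomy i j with h | h | h
    · simp [h, h.ne, not_lt.mpr h.le]
    · simp [h]
    · simp [h, (h.ne).symm, not_lt.mpr h.le]
  calc ∑ i, ∑ j, F i j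
      = ∑ i, ∑ j, ((if i < j then F i j else 0)
        + (if j < i then F i j else 0) + (if i = j then F i j else 0)) := by
        exact Finset.sum_congr rfl fun i _ => Finset.sum_congr rfl fun j _ => pointwise i j
    _ = ((∑ i, ∑ j, if i < j then F i j else 0) + ∑ i, ∑ j, if j < i then F i j else 0)
        + ∑ i, ∑ j, if i = j then F i j else 0 := by
        simp only [Finset.sum_add_distrib]
    _ = (∑ i, ∑ j, if i < j then F i j + F j i else 0) + ∑ i, F i i := by
        congr 1
        · rw [Finset.sum_comm (f := fun i j => if j < i then F i j else 0)]
          rw [← Finset.sum_add_distrib]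
          refine Finset.sum_congr rfl fun i _ => ?_
          rw [← Finset.sum_add_distrib]
          refine Finset.sum_congr rfl fun j _ => ?_
          by_cases h : i < j <;> simp [h]
        · refine Finset.sum_congr rfl fun i _ => ?_
          simp
  
end Decomp
/-- if some w ∈ D_qc(n) is not in D_qa(n), then there are y ∈ [0,1]^n and
a vector x = (x i j)_{i<j} with u_q(y,x) ≠ u_qc(y,x). -/
theorem stmt12 (n : ℕ) (h : ∃ w, w ∈ Dqc n ∧ w ∉ Dqa n) :
    ∃ y : Fin n → ℝ, (∀ i, y i ∈ Set.Icc (0 : ℝ) 1) ∧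
      ∃ x : Fin n → Fin n → ℝ, uVal (Dq n) y x ≠ uVal (Dqc n) y x := by
  classical
  obtain ⟨w, hwqc, hwqa⟩ := h
  set y : Fin n → ℝ := fun i => w i i with hy
  have hyIcc : ∀ i, y i ∈ Set.Icc (0:ℝ) 1 := fun i => dqc_diag_mem hwqc i
  refine ⟨y, hyIcc, ?_⟩
  have hconv : Convex ℝ (Dqa n) := Dq_convex.closure
  have hclosed : IsClosed (Dqa n) := isClosed_closure
  obtain ⟨f, u, hfu, hu⟩ :=
    @geometric_hahn_banach_closed_point (Fin n → Fin n → ℝ) _ _ _ _ _ inferInstance inferInstance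
      inferInstance hconv hclosed hwqa
  set c : Fin n → Fin n → ℝ :=
    fun i j => f (Pi.single i (Pi.single j (1:ℝ)) : Fin n → Fin n → ℝ) with hcdef
  set x : Fin n → Fin n → ℝ := fun i j => c i j + c j i with hxdef
  set C : ℝ := ∑ i, y i * c i i with hCdef
  refine ⟨x, ?_⟩
  have key : ∀ p : Matrix (Fin n) (Fin n) ℝ, p.IsSymm → (∀ i, p i i = y i) →
      ∀ wv : Fin n → Fin n → ℝ, (∀ i j, i < j → p i j = wv i j) →
      f p = (∑ i, ∑ j, if i < j then x i j * wv i j else 0) + C := by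
    intro p hsym hd wv hup
    rw [clm_decomp f p, sum_split (fun i j => p i j * c i j)]
    congr 1
    · refine Finset.sum_congr rfl fun i _ => Finset.sum_congr rfl fun j _ => ?_
      by_cases hij : i < j
      · simp only [if_pos hij]
        rw [hsym.apply i j, hup i j hij, hxdef]
        ring
      · simp [hij]
    · rw [hCdef]
      refine Finset.sum_congr rfl fun i _ => ?_
      rw [hd i]
  have hq : uVal (Dq n) y x ≤ u - C := by
    rw [uVal]
    apply csSup_le
    · obtain ⟨hp0, hp0d⟩ := bern_mem_Dq y hyIcc
      exact ⟨_, Set.mem_image_of_mem _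
        ⟨_, hp0, fun i j _ => rfl, hp0d⟩⟩
    · rintro v ⟨wv, ⟨p, hpDq, hup, hd⟩, rfl⟩
      have hval := key p hpDq.1 hd wv hup
      have hlt : f p < u := hfu p (subset_closure hpDq)
      linarith
  have hqc : u - C < uVal (Dqc n) y x := by
    have hwm : (fun i j => w i j) ∈ ySlice (Dqc n) y :=
      ⟨w, hwqc, fun i j _ => rfl, fun i => rfl⟩
    have hval : f w = (∑ i, ∑ j, if i < j then x i j * w i j else 0) + C :=
      key w hwqc.1 (fun i => rfl) (fun i j => w i j) (fun i j _ => rfl)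
    have hbdd : BddAbove ((fun wv => ∑ i, ∑ j, if i < j then x i j * wv i j else 0) ''
        ySlice (Dqc n) y) := by
      refine ⟨∑ i, ∑ j, |x i j|, ?_⟩
      rintro v ⟨wv, ⟨p, hpqc, hup, hd⟩, rfl⟩
      refine Finset.sum_le_sum fun i _ => Finset.sum_le_sum fun j _ => ?_
      by_cases hij : i < j
      · simp only [if_pos hij]
        calc x i j * wv i j ≤ |x i j * wv i j| := le_abs_self _
          _ = |x i j| * |wv i j| := abs_mul _ _
          _ ≤ |x i j| * 1 := by
              apply mul_le_mul_of_nonneg_left _ (abs_nonneg _)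
              rw [← hup i j hij]
              exact dqc_entry_mem hpqc i j
          _ = |x i j| := mul_one _
      · simp [hij]
    have hmem : (∑ i, ∑ j, if i < j then x i j * w i j else 0) ∈
        ((fun wv => ∑ i, ∑ j, if i < j then x i j * wv i j else 0) '' ySlice (Dqc n) y) :=
      Set.mem_image_of_mem _ hwm
    have h2 := le_csSup hbdd hmem
    rw [uVal]
    linarith
  exact ne_of_lt (lt_of_le_of_lt hq hqc)
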